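/- (Orthogonality of the transformed odd basis) Let q, q̃ ∈ (ℂ^×)^{n+1} with q₀ = q̃₀, V an (n+1)×(n+1) matrix with diag(q) V diag(q̃) Vᵗ = q₀ I, and κ, κ̃ ∈ ℂ^× with κκ̃ = q₀⁻¹. Define ξ̃ᵢ := κ̃ Σ_k q̃_k v_{i,k} ξ_k in the exterior algebra Λ[ξ₀,...,ξ_n], and define the bilinear form by ⟨ξ^ε, ξ^η⟩ := δ_{ε,η} κ^{|ε|}/q̃^ε on normal-ordered monomials. Then ⟨ξ̃^ε, ξ̃^η⟩ = δ_{ε,η} κ̃^{|ε|}/q^ε for all ε, η ∈ {0,1}^{n+1}. -/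

import Mathlib

open Matrix

/-- The generator `ξⱼ` of the exterior algebra `Λ[ξ₀,…,ξ_n]` over `ℂ`. -/
noncomputable def xiV (n : ℕ) (j : Fin (n+1)) : ExteriorAlgebra ℂ (Fin (n+1) → ℂ) :=
  ExteriorAlgebra.ι ℂ (Pi.single j 1)

/-- The ordered monomial `ξ^ε` for a subset encoding `ε ∈ {0,1}^{n+1}`. -/
noncomputable def xiProd (n : ℕ) (J : Finset (Fin (n+1))) :
    ExteriorAlgebra ℂ (Fin (n+1) → ℂ) :=
  ((J.sort (· ≤ ·)).map (xiV n)).prod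

/-- The transformed variable `ξ̃ᵢ = κ̃ Σ_k q̃_k v_{i,k} ξ_k`. -/
noncomputable def xitV (n : ℕ) (κt : ℂ) (qt : Fin (n+1) → ℂ)
    (V : Matrix (Fin (n+1)) (Fin (n+1)) ℂ) (i : Fin (n+1)) :
    ExteriorAlgebra ℂ (Fin (n+1) → ℂ) :=
  κt • ∑ k, (qt k * V i k) • xiV n k

/-- The ordered monomial `ξ̃^ε`. -/
noncomputable def xitProd (n : ℕ) (κt : ℂ) (qt : Fin (n+1) → ℂ)
    (V : Matrix (Fin (n+1)) (Fin (n+1)) ℂ) (J : Finset (Fin (n+1))) :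
    ExteriorAlgebra ℂ (Fin (n+1) → ℂ) :=
  ((J.sort (· ≤ ·)).map (xitV n κt qt V)).prod

namespace OddFormAux

noncomputable section

abbrev Lam (n : ℕ) := ExteriorAlgebra ℂ (Fin (n+1) → ℂ)

variable (n : ℕ)

def genL (w : Fin (n+1) → (Fin (n+1) → ℂ)) (L : List (Fin (n+1))) : Lam n :=
  (L.map (fun j => ExteriorAlgebra.ι ℂ (w j))).prod

@[simp] lemma genL_nil (w) : genL n w [] = 1 := rfl

@[simp] lemma genL_cons (w) (a) (L) :
    genL n w (a :: L) = ExteriorAlgebra.ι ℂ (w a) * genL n w L := by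
  simp [genL]

def ctr (d : Module.Dual ℂ (Fin (n+1) → ℂ)) : Lam n →ₗ[ℂ] Lam n :=
  CliffordAlgebra.contractLeft d

lemma ctr_ι_mul (d) (a) (b : Lam n) :
    ctr n d (ExteriorAlgebra.ι ℂ a * b) = d a • b - ExteriorAlgebra.ι ℂ a * ctr n d b :=
  CliffordAlgebra.contractLeft_ι_mul d a b

lemma ctr_one (d) : ctr n d (1 : Lam n) = 0 :=
  CliffordAlgebra.contractLeft_one _ d

lemma ctr_genL_zero (d) (w) (L) (h : ∀ a ∈ L, d (w a) = 0) :
    ctr n d (genL n w L) = 0 := by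
  induction L with
  | nil => simpa using ctr_one n d
  | cons a t ih =>
    rw [genL_cons, ctr_ι_mul, h a (by simp),
      ih (fun b hb => h b (by simp [hb])), zero_smul, mul_zero, sub_zero]

lemma ctr_genL_single (d) (w) (i) (c : ℂ) (L) (hnd : L.Nodup) (hi : i ∈ L)
    (h : ∀ a ∈ L, d (w a) = if a = i then c else 0) :
    ctr n d (genL n w L) = ((-1 : ℂ) ^ (L.idxOf i) * c) • genL n w (L.erase i) := by
  induction L with
  | nil => simp at hi
  | cons a t ih =>
    rcases eq_or_ne a i with rfl | hne
    · have hit : a ∉ t := (List.nodup_cons.mp hnd).1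
      rw [genL_cons, ctr_ι_mul, h a (by simp), if_pos rfl,
        ctr_genL_zero n d w t (fun b hb => by
          rw [h b (by simp [hb]), if_neg (fun hbi : b = a => hit (hbi ▸ hb))]),
        mul_zero, sub_zero, List.erase_cons_head, List.idxOf_cons_self]
      simp
    · have hit : i ∈ t := by
        rcases List.mem_cons.mp hi with h' | h'
        · exact absurd h'.symm hne
        · exact h'
      rw [genL_cons, ctr_ι_mul, h a (by simp), if_neg hne, zero_smul, zero_sub,
        ih (List.nodup_cons.mp hnd).2 hit (fun b hb => h b (by simp [hb])),
        List.erase_cons_tail (by simp [hne]), genL_cons,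
        List.idxOf_cons_ne _ hne]
      rw [mul_smul_comm]
      rw [← neg_smul]
      congr 1
      rw [Nat.succ_eq_add_one, pow_succ]
      ring

lemma ι_mul_genL_of_mem (w) (j) (L) (hj : j ∈ L) :
    ExteriorAlgebra.ι ℂ (w j) * genL n w L = 0 := by
  induction L with
  | nil => simp at hj
  | cons a t ih =>
    rcases eq_or_ne j a with rfl | hne
    · rw [genL_cons, ← mul_assoc, ExteriorAlgebra.ι_sq_zero, zero_mul]
    · have hjt : j ∈ t := by
        rcases List.mem_cons.mp hj with h' | h'
        · exact absurd h' hne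
        · exact h'
      have swap : ExteriorAlgebra.ι ℂ (w j) * ExteriorAlgebra.ι ℂ (w a)
          = -(ExteriorAlgebra.ι ℂ (w a) * ExteriorAlgebra.ι ℂ (w j)) :=
        eq_neg_of_add_eq_zero_left (ExteriorAlgebra.ι_add_mul_swap _ _)
      rw [genL_cons, ← mul_assoc, swap, neg_mul, mul_assoc, ih hjt, mul_zero, neg_zero]

lemma ι_mul_genL_sorted (w) (j) (L) (hs : L.Pairwise (· ≤ ·)) (hj : j ∉ L) :
    ExteriorAlgebra.ι ℂ (w j) * genL n w L
      = ((-1 : ℂ) ^ ((L.orderedInsert (· ≤ ·) j).idxOf j)) •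
          genL n w (L.orderedInsert (· ≤ ·) j) := by
  induction L with
  | nil => simp [List.orderedInsert]
  | cons a t ih =>
    by_cases hle : j ≤ a
    · rw [List.orderedInsert, if_pos hle, List.idxOf_cons_self]
      simp
    · have hja : j ≠ a := fun h => hle (le_of_eq h)
      have hjt : j ∉ t := fun h => hj (by simp [h])
      have hts : t.Pairwise (· ≤ ·) := (List.pairwise_cons.mp hs).2
      have swap : ExteriorAlgebra.ι ℂ (w j) * ExteriorAlgebra.ι ℂ (w a)
          = -(ExteriorAlgebra.ι ℂ (w a) * ExteriorAlgebra.ι ℂ (w j)) :=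
        eq_neg_of_add_eq_zero_left (ExteriorAlgebra.ι_add_mul_swap _ _)
      rw [List.orderedInsert, if_neg hle, genL_cons, ← mul_assoc, swap, neg_mul, mul_assoc,
        ih hts hjt, genL_cons, List.idxOf_cons_ne _ (Ne.symm hja)]
      rw [mul_smul_comm, ← neg_smul]
      congr 1
      rw [Nat.succ_eq_add_one, pow_succ]
      ring

def sing (j : Fin (n+1)) : Fin (n+1) → ℂ := Pi.single j 1

lemma xiProd_eq (S : Finset (Fin (n+1))) :
    xiProd n S = genL n (sing n) (S.sort (· ≤ ·)) := rfl

lemma xiProd_empty : xiProd n (∅ : Finset (Fin (n+1))) = 1 := by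
  rw [xiProd_eq, Finset.sort_empty, genL_nil]

lemma sort_insert (j : Fin (n+1)) (S : Finset (Fin (n+1))) (hj : j ∉ S) :
    (insert j S).sort (· ≤ ·) = (S.sort (· ≤ ·)).orderedInsert (· ≤ ·) j := by
  refine List.Perm.eq_of_pairwise' (hl := Multiset.coe_eq_coe.mp ?_) (Finset.pairwise_sort _ _)
    (List.Pairwise.orderedInsert _ _ (Finset.pairwise_sort _ _))
  rw [Finset.sort_eq, Multiset.coe_eq_coe.mpr (List.perm_orderedInsert (· ≤ ·) j _),
    ← Multiset.cons_coe, Finset.sort_eq, Finset.insert_val,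
    Multiset.ndinsert_of_notMem hj]

lemma sort_erase (j : Fin (n+1)) (T : Finset (Fin (n+1))) :
    (T.erase j).sort (· ≤ ·) = (T.sort (· ≤ ·)).erase j := by
  have hms : ((T.erase j).sort (· ≤ ·) : Multiset (Fin (n+1)))
      = ↑((T.sort (· ≤ ·)).erase j) := by
    rw [Finset.sort_eq, ← Multiset.coe_erase, Finset.sort_eq, Finset.erase_val]
  exact List.Perm.eq_of_pairwise' (hl := Multiset.coe_eq_coe.mp hms) (Finset.pairwise_sort _ _)
    (List.Pairwise.sublist (List.erase_sublist) (Finset.pairwise_sort _ _))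

/-- Expansion of `ι v` as a combination of generators times `x`. -/
lemma ι_mul_expand (v : Fin (n+1) → ℂ) (x : Lam n) :
    ExteriorAlgebra.ι ℂ v * x
      = ∑ j, v j • (ExteriorAlgebra.ι ℂ (sing n j) * x) := by
  have hv : v = ∑ j, v j • sing n j := by
    funext k
    simp [sing, Finset.sum_apply, Pi.single_apply]
  conv_lhs => rw [hv]
  rw [map_sum]
  rw [Finset.sum_mul]
  refine Finset.sum_congr rfl fun j _ => ?_
  rw [LinearMap.map_smul, smul_mul_assoc]

def spanXi : Submodule ℂ (Lam n) := Submodule.span ℂ (Set.range (xiProd n))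

lemma ι_sing_mul_mem_span (j : Fin (n+1)) {x : Lam n} (hx : x ∈ spanXi n) :
    ExteriorAlgebra.ι ℂ (sing n j) * x ∈ spanXi n := by
  refine Submodule.span_induction ?_ ?_ ?_ ?_ hx
  · rintro _ ⟨S, rfl⟩
    by_cases hj : j ∈ S
    · rw [xiProd_eq, ι_mul_genL_of_mem n _ _ _ (by rwa [Finset.mem_sort])]
      exact zero_mem _
    · rw [xiProd_eq, ι_mul_genL_sorted n _ _ _ (Finset.pairwise_sort _ _)
        (by rwa [Finset.mem_sort]), ← sort_insert n j S hj, ← xiProd_eq]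
      exact Submodule.smul_mem _ _ (Submodule.subset_span ⟨_, rfl⟩)
  · rw [mul_zero]; exact zero_mem _
  · intro a b _ _ ha hb
    rw [mul_add]; exact add_mem ha hb
  · intro c a _ ha
    rw [mul_smul_comm]; exact Submodule.smul_mem _ _ ha

lemma ι_mul_mem_span (v : Fin (n+1) → ℂ) {x : Lam n} (hx : x ∈ spanXi n) :
    ExteriorAlgebra.ι ℂ v * x ∈ spanXi n := by
  rw [ι_mul_expand]
  exact Submodule.sum_mem _ fun j _ =>
    Submodule.smul_mem _ _ (ι_sing_mul_mem_span n j hx)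

lemma genL_mul_mem_span (L : List (Fin (n+1))) (w) {x : Lam n} (hx : x ∈ spanXi n) :
    genL n w L * x ∈ spanXi n := by
  induction L with
  | nil => rwa [genL_nil, one_mul]
  | cons a t ih =>
    rw [genL_cons, mul_assoc]
    exact ι_mul_mem_span n _ (ih)

lemma one_mem_span : (1 : Lam n) ∈ spanXi n := by
  rw [← xiProd_empty n]
  exact Submodule.subset_span ⟨∅, rfl⟩

lemma mem_span_top (x : Lam n) : x ∈ spanXi n := by
  induction x using ExteriorAlgebra.induction with
  | algebraMap r =>
    rw [Algebra.algebraMap_eq_smul_one]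
    exact Submodule.smul_mem _ _ (one_mem_span n)
  | ι v =>
    rw [← mul_one (ExteriorAlgebra.ι ℂ v)]
    exact ι_mul_mem_span n v (one_mem_span n)
  | mul a b ha hb =>
    refine Submodule.span_induction ?_ ?_ ?_ ?_ ha
    · rintro _ ⟨S, rfl⟩
      rw [xiProd_eq]
      exact genL_mul_mem_span n _ _ hb
    · rw [zero_mul]; exact zero_mem _
    · intro x y _ _ hx hy
      rw [add_mul]; exact add_mem hx hy
    · intro c x _ hx
      rw [smul_mul_assoc]; exact Submodule.smul_mem _ _ hx
  | add a b ha hb => exact add_mem ha hb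

def dproj (t : Fin (n+1)) : Module.Dual ℂ (Fin (n+1) → ℂ) := LinearMap.proj t

lemma dproj_sing (t a : Fin (n+1)) : dproj n t (sing n a) = if a = t then 1 else 0 := by
  simp [dproj, sing, Pi.single_apply, eq_comm]

def Fc : List (Fin (n+1)) → (Lam n →ₗ[ℂ] Lam n)
  | [] => LinearMap.id
  | t :: ts => (Fc ts).comp (ctr n (dproj n t))

@[simp] lemma Fc_nil (x : Lam n) : Fc n [] x = x := rfl

@[simp] lemma Fc_cons (t) (ts) (x : Lam n) :
    Fc n (t :: ts) x = Fc n ts (ctr n (dproj n t) x) := rfl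

def phi (T : Finset (Fin (n+1))) : Lam n →ₗ[ℂ] ℂ :=
  (ExteriorAlgebra.algebraMapInv.toLinearMap).comp (Fc n (T.sort (· ≤ ·)))

lemma algebraMapInv_ι (v : Fin (n+1) → ℂ) :
    ExteriorAlgebra.algebraMapInv (ExteriorAlgebra.ι ℂ v) = (0 : ℂ) := by
  rw [ExteriorAlgebra.algebraMapInv, ExteriorAlgebra.lift_ι_apply]
  rfl

lemma algebraMapInv_genL_cons (w) (a) (L) :
    ExteriorAlgebra.algebraMapInv (genL n w (a :: L)) = (0 : ℂ) := by
  rw [genL_cons, _root_.map_mul, algebraMapInv_ι, zero_mul]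

lemma Fc_genL_self (L : List (Fin (n+1))) (hnd : L.Nodup) :
    Fc n L (genL n (sing n) L) = 1 := by
  induction L with
  | nil => simp
  | cons t ts ih =>
    rw [Fc_cons, ctr_genL_single n _ _ t 1 _ hnd (by simp)
      (fun a _ => dproj_sing n t a), List.erase_cons_head, List.idxOf_cons_self]
    simpa using ih (List.nodup_cons.mp hnd).2

lemma Fc_genL_struct (Ts : List (Fin (n+1))) : ∀ (L : List (Fin (n+1))), L.Nodup →
    Fc n Ts (genL n (sing n) L) = 0 ∨
      ((Ts : Multiset (Fin (n+1))) ≤ (L : Multiset (Fin (n+1))) ∧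
        ∃ (ε : ℂ) (L' : List (Fin (n+1))), L'.Nodup ∧
          ((L' : Multiset (Fin (n+1))) = (L : Multiset (Fin (n+1))) - (Ts : Multiset (Fin (n+1)))) ∧
          Fc n Ts (genL n (sing n) L) = ε • genL n (sing n) L') := by
  induction Ts with
  | nil =>
    intro L h
    right
    exact ⟨by simp, 1, L, h, by simp, (one_smul _ _).symm⟩
  | cons t ts ih =>
    intro L hL
    rw [Fc_cons]
    by_cases ht : t ∈ L
    · rw [ctr_genL_single n _ _ t 1 _ hL ht (fun a _ => dproj_sing n t a), _root_.map_smul]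
      rcases ih (L.erase t) (hL.erase t) with h0 | ⟨hle, ε, L', hnd', hms, heqv⟩
      · left; rw [h0, smul_zero]
      · right
        have htm : t ∈ (L : Multiset (Fin (n+1))) := by simpa using ht
        constructor
        · rw [← Multiset.cons_coe]
          calc (t ::ₘ (ts : Multiset (Fin (n+1))))
              ≤ t ::ₘ ((L.erase t : List (Fin (n+1))) : Multiset (Fin (n+1))) :=
                Multiset.cons_le_cons _ hle
            _ = (L : Multiset (Fin (n+1))) := by
                rw [← Multiset.coe_erase, Multiset.cons_erase htm]
        · refine ⟨((-1 : ℂ) ^ (L.idxOf t) * 1) * ε, L', hnd', ?_, ?_⟩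
          · rw [hms, ← Multiset.cons_coe, Multiset.sub_cons, ← Multiset.coe_erase]
          · rw [heqv, smul_smul]
    · left
      rw [ctr_genL_zero n _ _ _ (fun a ha => by
        rw [dproj_sing, if_neg (fun (h : a = t) => ht (h ▸ ha))]), map_zero]

lemma phi_xiProd (T S : Finset (Fin (n+1))) :
    phi n T (xiProd n S) = if T = S then 1 else 0 := by
  rw [phi]
  simp only [LinearMap.comp_apply, AlgHom.toLinearMap_apply]
  rcases eq_or_ne T S with rfl | hne
  · rw [if_pos rfl, xiProd_eq, Fc_genL_self n _ (Finset.sort_nodup _ _), _root_.map_one]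
  · rw [if_neg hne, xiProd_eq]
    rcases Fc_genL_struct n (T.sort (· ≤ ·)) (S.sort (· ≤ ·)) (Finset.sort_nodup _ _) with
      h0 | ⟨hle, ε, L', hnd', hms, heqv⟩
    · rw [h0, map_zero]
    · rw [heqv, _root_.map_smul]
      cases L' with
      | cons a L'' => rw [algebraMapInv_genL_cons]; simp
      | nil =>
        exfalso
        apply hne
        have hsub : ((S.sort (· ≤ ·) : List (Fin (n+1))) : Multiset (Fin (n+1)))
            - (T.sort (· ≤ ·) : List (Fin (n+1))) = 0 := by
          rw [← hms]; rfl
        have := le_antisymm (by rwa [tsub_eq_zero_iff_le] at hsub) hle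
        rw [Finset.sort_eq, Finset.sort_eq] at this
        exact (Finset.val_inj.mp this).symm

lemma phi_one (T : Finset (Fin (n+1))) :
    phi n T (1 : Lam n) = if T = ∅ then 1 else 0 := by
  have := phi_xiProd n T ∅
  rwa [xiProd_empty] at this

def wS (κ : ℂ) (qt : Fin (n+1) → ℂ) (S : Finset (Fin (n+1))) : ℂ :=
  κ ^ S.card / ∏ j ∈ S, qt j

def Bf (κ : ℂ) (qt : Fin (n+1) → ℂ) (x y : Lam n) : ℂ :=
  ∑ S : Finset (Fin (n+1)), phi n S x * phi n S y * wS n κ qt S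

variable (κ : ℂ) (qt : Fin (n+1) → ℂ)

lemma Bf_zero_left (y) : Bf n κ qt 0 y = 0 := by simp [Bf]

lemma Bf_zero_right (x) : Bf n κ qt x 0 = 0 := by simp [Bf]

lemma Bf_smul_left (c : ℂ) (x y) : Bf n κ qt (c • x) y = c * Bf n κ qt x y := by
  rw [Bf, Bf, Finset.mul_sum]
  refine Finset.sum_congr rfl fun S _ => ?_
  rw [LinearMap.map_smul, smul_eq_mul]; ring

lemma Bf_smul_right (c : ℂ) (x y) : Bf n κ qt x (c • y) = c * Bf n κ qt x y := by
  rw [Bf, Bf, Finset.mul_sum]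
  refine Finset.sum_congr rfl fun S _ => ?_
  rw [LinearMap.map_smul, smul_eq_mul]; ring

lemma Bf_add_left (x₁ x₂ y) :
    Bf n κ qt (x₁ + x₂) y = Bf n κ qt x₁ y + Bf n κ qt x₂ y := by
  rw [Bf, Bf, Bf, ← Finset.sum_add_distrib]
  refine Finset.sum_congr rfl fun S _ => ?_
  rw [LinearMap.map_add]; ring

lemma Bf_add_right (x y₁ y₂) :
    Bf n κ qt x (y₁ + y₂) = Bf n κ qt x y₁ + Bf n κ qt x y₂ := by
  rw [Bf, Bf, Bf, ← Finset.sum_add_distrib]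
  refine Finset.sum_congr rfl fun S _ => ?_
  rw [LinearMap.map_add]; ring

lemma Bf_sum_left {ι : Type*} (s : Finset ι) (f : ι → Lam n) (y) :
    Bf n κ qt (∑ i ∈ s, f i) y = ∑ i ∈ s, Bf n κ qt (f i) y := by
  classical
  induction s using Finset.induction_on with
  | empty => simp [Bf_zero_left]
  | insert _ _ hni ih =>
    rw [Finset.sum_insert hni, Finset.sum_insert hni, Bf_add_left, ih]

lemma Bf_sum_right {ι : Type*} (s : Finset ι) (f : ι → Lam n) (x) :
    Bf n κ qt x (∑ i ∈ s, f i) = ∑ i ∈ s, Bf n κ qt x (f i) := by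
  classical
  induction s using Finset.induction_on with
  | empty => simp [Bf_zero_right]
  | insert _ _ hni ih =>
    rw [Finset.sum_insert hni, Finset.sum_insert hni, Bf_add_right, ih]

lemma Bf_mono (A B : Finset (Fin (n+1))) :
    Bf n κ qt (xiProd n A) (xiProd n B) = if A = B then wS n κ qt A else 0 := by
  rw [Bf]
  have h : ∀ S : Finset (Fin (n+1)),
      phi n S (xiProd n A) * phi n S (xiProd n B) * wS n κ qt S
        = if S = A then (if A = B then wS n κ qt A else 0) else 0 := by
    intro S
    rw [phi_xiProd, phi_xiProd]
    rcases eq_or_ne S A with rfl | hSA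
    · rcases eq_or_ne S B with rfl | hSB
      · simp
      · simp [hSB]
    · simp [hSA]
  rw [Finset.sum_congr rfl (fun S _ => h S), Finset.sum_ite_eq' Finset.univ A,
    if_pos (Finset.mem_univ A)]

lemma Bf_one_left (y : Lam n) :
    Bf n κ qt 1 y = ExteriorAlgebra.algebraMapInv y := by
  rw [Bf]
  have h : ∀ S : Finset (Fin (n+1)),
      phi n S (1 : Lam n) * phi n S y * wS n κ qt S
        = if S = ∅ then ExteriorAlgebra.algebraMapInv y else 0 := by
    intro S
    rw [phi_one]
    rcases eq_or_ne S ∅ with rfl | hS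
    · rw [if_pos rfl, if_pos rfl, one_mul, wS, Finset.card_empty, Finset.prod_empty, pow_zero]
      have hphi : phi n ∅ y = ExteriorAlgebra.algebraMapInv y := by
        rw [phi]; simp [Finset.sort_empty]
      rw [hphi]; ring
    · simp [hS]
  rw [Finset.sum_congr rfl (fun S _ => h S), Finset.sum_ite_eq' Finset.univ ∅,
    if_pos (Finset.mem_univ _)]

lemma Bf_adjoint_single (hqt : ∀ i, qt i ≠ 0) (j : Fin (n+1)) (x y : Lam n) :
    Bf n κ qt (ExteriorAlgebra.ι ℂ (sing n j) * x) y
      = (κ / qt j) * Bf n κ qt x (ctr n (dproj n j) y) := by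
  have main : ∀ S T : Finset (Fin (n+1)),
      Bf n κ qt (ExteriorAlgebra.ι ℂ (sing n j) * xiProd n S) (xiProd n T)
        = (κ / qt j) * Bf n κ qt (xiProd n S) (ctr n (dproj n j) (xiProd n T)) := by
    intro S T
    by_cases hjT : j ∈ T
    · have hctr : ctr n (dproj n j) (xiProd n T)
          = ((-1 : ℂ) ^ ((T.sort (· ≤ ·)).idxOf j) * 1) • xiProd n (T.erase j) := by
        rw [xiProd_eq, ctr_genL_single n _ _ j 1 _ (Finset.sort_nodup _ _)
          ((Finset.mem_sort _).mpr hjT) (fun a _ => dproj_sing n j a), ← sort_erase, ← xiProd_eq]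
      by_cases hjS : j ∈ S
      · rw [xiProd_eq n S, ι_mul_genL_of_mem n _ _ _ ((Finset.mem_sort _).mpr hjS),
          Bf_zero_left, hctr, Bf_smul_right, ← xiProd_eq, Bf_mono,
          if_neg (fun (h : S = T.erase j) => Finset.notMem_erase j T (h ▸ hjS))]
        ring
      · have hins : ExteriorAlgebra.ι ℂ (sing n j) * xiProd n S
            = ((-1:ℂ) ^ (((insert j S).sort (· ≤ ·)).idxOf j)) • xiProd n (insert j S) := by
          rw [xiProd_eq n S, ι_mul_genL_sorted n _ _ _ (Finset.pairwise_sort _ _)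
            (fun h => hjS ((Finset.mem_sort _).mp h)), ← sort_insert n j S hjS, ← xiProd_eq]
        rw [hins, hctr, Bf_smul_left, Bf_smul_right, Bf_mono, Bf_mono]
        by_cases hST : S = T.erase j
        · have hT : T = insert j S := by rw [hST, Finset.insert_erase hjT]
          subst hT
          rw [if_pos rfl, if_pos hST, wS, wS, Finset.card_insert_of_notMem hjS,
            Finset.prod_insert hjS]
          have h1 : qt j ≠ 0 := hqt j
          field_simp
          ring
        · rw [if_neg (fun (h : insert j S = T) => hST (by rw [← h, Finset.erase_insert hjS])),
            if_neg hST]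
          ring
    · have hctr : ctr n (dproj n j) (xiProd n T) = 0 := by
        rw [xiProd_eq]
        exact ctr_genL_zero n _ _ _ (fun a ha => by
          rw [dproj_sing, if_neg (fun (h : a = j) => hjT (h ▸ (Finset.mem_sort _).mp ha))])
      rw [hctr, Bf_zero_right, mul_zero]
      by_cases hjS : j ∈ S
      · rw [xiProd_eq n S, ι_mul_genL_of_mem n _ _ _ ((Finset.mem_sort _).mpr hjS), Bf_zero_left]
      · have hins : ExteriorAlgebra.ι ℂ (sing n j) * xiProd n S
            = ((-1:ℂ) ^ (((insert j S).sort (· ≤ ·)).idxOf j)) • xiProd n (insert j S) := by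
          rw [xiProd_eq n S, ι_mul_genL_sorted n _ _ _ (Finset.pairwise_sort _ _)
            (fun h => hjS ((Finset.mem_sort _).mp h)), ← sort_insert n j S hjS, ← xiProd_eq]
        rw [hins, Bf_smul_left, Bf_mono,
          if_neg (fun (h : insert j S = T) => hjT (h ▸ Finset.mem_insert_self j S)), mul_zero]
  have hx := mem_span_top n x
  revert y
  refine Submodule.span_induction
    (p := fun x _ => ∀ y, Bf n κ qt (ExteriorAlgebra.ι ℂ (sing n j) * x) y
      = (κ / qt j) * Bf n κ qt x (ctr n (dproj n j) y)) ?_ ?_ ?_ ?_ hx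
  · rintro _ ⟨S, rfl⟩ y
    have hy := mem_span_top n y
    refine Submodule.span_induction
      (p := fun y _ => Bf n κ qt (ExteriorAlgebra.ι ℂ (sing n j) * xiProd n S) y
        = (κ / qt j) * Bf n κ qt (xiProd n S) (ctr n (dproj n j) y)) ?_ ?_ ?_ ?_ hy
    · rintro _ ⟨T, rfl⟩; exact main S T
    · show Bf n κ qt (ExteriorAlgebra.ι ℂ (sing n j) * xiProd n S) 0
          = κ / qt j * Bf n κ qt (xiProd n S) (ctr n (dproj n j) 0)
      rw [Bf_zero_right, map_zero, Bf_zero_right, mul_zero]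
    · intro y₁ y₂ _ _ h₁ h₂
      rw [LinearMap.map_add, Bf_add_right, Bf_add_right, h₁, h₂, mul_add]
    · intro c y₁ _ h₁
      rw [LinearMap.map_smul, Bf_smul_right, Bf_smul_right, h₁]; ring
  · intro y
    show Bf n κ qt (ExteriorAlgebra.ι ℂ (sing n j) * 0) y
        = κ / qt j * Bf n κ qt 0 (ctr n (dproj n j) y)
    rw [mul_zero, Bf_zero_left, Bf_zero_left, mul_zero]
  · intro x₁ x₂ _ _ h₁ h₂ y
    rw [mul_add, Bf_add_left, Bf_add_left, h₁ y, h₂ y, mul_add]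
  · intro c x₁ _ h₁ y
    rw [mul_smul_comm, Bf_smul_left, Bf_smul_left, h₁ y]; ring

def dform (κ : ℂ) (qt v : Fin (n+1) → ℂ) : Module.Dual ℂ (Fin (n+1) → ℂ) :=
  ∑ j, (κ / qt j * v j) • dproj n j

lemma dform_apply (v u : Fin (n+1) → ℂ) :
    dform n κ qt v u = ∑ j, (κ / qt j * v j) * u j := by
  simp [dform, dproj]

lemma ctr_dual_sum {ι : Type*} (s : Finset ι) (d : ι → Module.Dual ℂ (Fin (n+1) → ℂ)) (y) :
    ctr n (∑ i ∈ s, d i) y = ∑ i ∈ s, ctr n (d i) y := by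
  unfold ctr; rw [map_sum, LinearMap.sum_apply]

lemma ctr_dual_smul (a : ℂ) (d) (y : Lam n) : ctr n (a • d) y = a • ctr n d y := by
  unfold ctr; rw [LinearMap.map_smul, LinearMap.smul_apply]

lemma Bf_adjoint (hqt : ∀ i, qt i ≠ 0) (v : Fin (n+1) → ℂ) (x y : Lam n) :
    Bf n κ qt (ExteriorAlgebra.ι ℂ v * x) y = Bf n κ qt x (ctr n (dform n κ qt v) y) := by
  rw [ι_mul_expand, Bf_sum_left]
  have hd : dform n κ qt v = ∑ j, v j • ((κ / qt j) • dproj n j) := by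
    rw [dform]
    refine Finset.sum_congr rfl fun j _ => ?_
    rw [smul_smul]; ring_nf
  rw [hd, ctr_dual_sum, Bf_sum_right]
  refine Finset.sum_congr rfl fun j _ => ?_
  rw [Bf_smul_left, Bf_adjoint_single n κ qt hqt, ctr_dual_smul, ctr_dual_smul,
    Bf_smul_right, Bf_smul_right]

def vvec (κt : ℂ) (qt : Fin (n+1) → ℂ) (V : Matrix (Fin (n+1)) (Fin (n+1)) ℂ)
    (i : Fin (n+1)) : Fin (n+1) → ℂ :=
  κt • ∑ k, (qt k * V i k) • sing n k

lemma vvec_apply (κt : ℂ) (V) (i j : Fin (n+1)) :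
    vvec n κt qt V i j = κt * (qt j * V i j) := by
  simp [vvec, sing, Finset.sum_apply, Pi.single_apply]

lemma xitV_eq (κt : ℂ) (V) (i : Fin (n+1)) :
    xitV n κt qt V i = ExteriorAlgebra.ι ℂ (vvec n κt qt V i) := by
  rw [xitV, vvec, LinearMap.map_smul, map_sum]
  congr 1
  refine Finset.sum_congr rfl fun k _ => ?_
  rw [LinearMap.map_smul]
  rfl

lemma xitProd_eq (κt : ℂ) (V) (J : Finset (Fin (n+1))) :
    xitProd n κt qt V J = genL n (vvec n κt qt V) (J.sort (· ≤ ·)) := by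
  rw [xitProd, genL]
  congr 1
  exact List.map_congr_left fun a _ => xitV_eq n qt κt V a

lemma hW_entry (q : Fin (n+1) → ℂ) (V : Matrix (Fin (n+1)) (Fin (n+1)) ℂ)
    (hq : ∀ i, q i ≠ 0)
    (hV : diagonal q * V * diagonal qt * Vᵀ = q 0 • (1 : Matrix (Fin (n+1)) (Fin (n+1)) ℂ))
    (e h : Fin (n+1)) :
    ∑ j, V e j * qt j * V h j = if e = h then q 0 / q e else 0 := by
  have hentry := congrArg (fun M : Matrix (Fin (n+1)) (Fin (n+1)) ℂ => M e h) hV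
  replace hentry : (diagonal q * V * diagonal qt * Vᵀ) e h
      = (q 0 • (1 : Matrix (Fin (n+1)) (Fin (n+1)) ℂ)) e h := hentry
  have hL : (diagonal q * V * diagonal qt * Vᵀ) e h = q e * ∑ j, V e j * qt j * V h j := by
    rw [Matrix.mul_apply, Finset.mul_sum]
    refine Finset.sum_congr rfl fun j _ => ?_
    rw [Matrix.mul_diagonal, Matrix.diagonal_mul, Matrix.transpose_apply]
    ring
  have hR : (q 0 • (1 : Matrix (Fin (n+1)) (Fin (n+1)) ℂ)) e h
      = if e = h then q 0 else 0 := by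
    rw [Matrix.smul_apply, Matrix.one_apply]
    simp
  rw [hL, hR] at hentry
  rcases eq_or_ne e h with rfl | hne
  · rw [if_pos rfl] at hentry ⊢
    rw [eq_div_iff (hq e), mul_comm]
    exact hentry
  · rw [if_neg hne] at hentry ⊢
    exact (mul_eq_zero.mp hentry).resolve_left (hq e)

lemma dform_vvec (q : Fin (n+1) → ℂ) (κt : ℂ) (V : Matrix (Fin (n+1)) (Fin (n+1)) ℂ)
    (hq : ∀ i, q i ≠ 0) (hqt : ∀ i, qt i ≠ 0) (hκ : κ * κt = (q 0)⁻¹)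
    (hV : diagonal q * V * diagonal qt * Vᵀ = q 0 • (1 : Matrix (Fin (n+1)) (Fin (n+1)) ℂ))
    (e h : Fin (n+1)) :
    dform n κ qt (vvec n κt qt V e) (vvec n κt qt V h)
      = if h = e then κt / q e else 0 := by
  rw [dform_apply]
  have hterm : ∀ j, (κ / qt j * vvec n κt qt V e j) * vvec n κt qt V h j
      = (κ * κt * κt) * (V e j * qt j * V h j) := by
    intro j
    rw [vvec_apply, vvec_apply]
    have hj := hqt j
    field_simp
  rw [Finset.sum_congr rfl fun j _ => hterm j, ← Finset.mul_sum,
    hW_entry n qt q V hq hV e h, hκ]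
  have h0 : q 0 ≠ 0 := hq 0
  have he : q e ≠ 0 := hq e
  rcases eq_or_ne e h with rfl | hne
  · rw [if_pos rfl, if_pos rfl]
    field_simp
  · rw [if_neg hne, if_neg (Ne.symm hne), mul_zero]

lemma Bf_xit (q : Fin (n+1) → ℂ) (κt : ℂ) (V : Matrix (Fin (n+1)) (Fin (n+1)) ℂ)
    (hq : ∀ i, q i ≠ 0) (hqt : ∀ i, qt i ≠ 0) (hκ : κ * κt = (q 0)⁻¹)
    (hV : diagonal q * V * diagonal qt * Vᵀ = q 0 • (1 : Matrix (Fin (n+1)) (Fin (n+1)) ℂ)) :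
    ∀ (L₁ L₂ : List (Fin (n+1))), L₁.Pairwise (· < ·) → L₂.Pairwise (· < ·) →
      Bf n κ qt (genL n (vvec n κt qt V) L₁) (genL n (vvec n κt qt V) L₂)
        = if L₁ = L₂ then (L₁.map (fun j => κt / q j)).prod else 0 := by
  intro L₁
  induction L₁ with
  | nil =>
    intro L₂ _ _
    rw [genL_nil, Bf_one_left]
    cases L₂ with
    | nil => rw [genL_nil, _root_.map_one, if_pos rfl, List.map_nil, List.prod_nil]
    | cons a t => rw [algebraMapInv_genL_cons, if_neg (by simp)]
  | cons e L₁' ih =>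
    intro L₂ hs₁ hs₂
    have hnd₂ : L₂.Nodup := hs₂.imp ne_of_lt
    have hs₁' : L₁'.Pairwise (· < ·) := (List.pairwise_cons.mp hs₁).2
    rw [genL_cons, Bf_adjoint n κ qt hqt]
    by_cases heq : e :: L₁' = L₂
    · rw [← heq]
      have hnd₁ : (e :: L₁').Nodup := hs₁.imp ne_of_lt
      rw [ctr_genL_single n _ _ e (κt / q e) _ hnd₁ (by simp)
          (fun a _ => dform_vvec n κ qt q κt V hq hqt hκ hV e a),
        List.erase_cons_head, List.idxOf_cons_self, pow_zero, one_mul, Bf_smul_right,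
        ih _ hs₁' hs₁', if_pos rfl, if_pos rfl, List.map_cons, List.prod_cons]
    · rw [if_neg heq]
      by_cases hm : e ∈ L₂
      · have hsub : L₁' ≠ L₂.erase e := by
          intro hcontr
          apply heq
          have hml : ((e :: L₁' : List (Fin (n+1))) : Multiset (Fin (n+1)))
              = (L₂ : Multiset (Fin (n+1))) := by
            rw [← Multiset.cons_coe, hcontr, ← Multiset.coe_erase,
              Multiset.cons_erase (by simpa using hm)]
          exact List.Perm.eq_of_pairwise' (hl := Multiset.coe_eq_coe.mp hml)
            (hs₁.imp le_of_lt) (hs₂.imp le_of_lt)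
        rw [ctr_genL_single n _ _ e (κt / q e) _ hnd₂ hm
            (fun a _ => dform_vvec n κ qt q κt V hq hqt hκ hV e a),
          Bf_smul_right, ih _ hs₁' (List.Pairwise.sublist (List.erase_sublist) hs₂),
          if_neg hsub, mul_zero]
      · rw [ctr_genL_zero n _ _ _ (fun a ha => by
            rw [dform_vvec n κ qt q κt V hq hqt hκ hV e a,
              if_neg (fun (h : a = e) => hm (h ▸ ha))]),
          Bf_zero_right]

end
end OddFormAux

open OddFormAux in
/-- Orthogonality of the transformed odd basis: if the bilinear form is given on
monomials by `⟨ξ^ε, ξ^η⟩ = δ_{ε,η} κ^{|ε|}/q̃^ε` (so that the pairing of two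
elements expanded in monomials as `Σ c_S ξ^S`, `Σ c'_S ξ^S` equals
`Σ_S c_S c'_S κ^{|S|}/q̃^S`), then `⟨ξ̃^ε, ξ̃^η⟩ = δ_{ε,η} κ̃^{|ε|}/q^ε`.
Subsets of `{0,…,n}` encode elements of `{0,1}^{n+1}`. -/
theorem odd_form_orthogonality (n : ℕ)
    (q qt : Fin (n+1) → ℂ) (hq : ∀ i, q i ≠ 0) (hqt : ∀ i, qt i ≠ 0)
    (h0 : q 0 = qt 0) (κ κt : ℂ) (hκ : κ * κt = (q 0)⁻¹)
    (V : Matrix (Fin (n+1)) (Fin (n+1)) ℂ)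
    (hV : diagonal q * V * diagonal qt * Vᵀ
        = q 0 • (1 : Matrix (Fin (n+1)) (Fin (n+1)) ℂ))
    (E H : Finset (Fin (n+1))) (c c' : Finset (Fin (n+1)) → ℂ)
    (hc : xitProd n κt qt V E = ∑ S : Finset (Fin (n+1)), c S • xiProd n S)
    (hc' : xitProd n κt qt V H = ∑ S : Finset (Fin (n+1)), c' S • xiProd n S) :
    ∑ S : Finset (Fin (n+1)), c S * c' S * (κ ^ S.card / ∏ j ∈ S, qt j)
      = if E = H then κt ^ E.card / ∏ j ∈ E, q j else 0 := by
  classical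
  have key : ∀ (J : Finset (Fin (n+1))) (d : Finset (Fin (n+1)) → ℂ),
      xitProd n κt qt V J = (∑ S : Finset (Fin (n+1)), d S • xiProd n S) →
      ∀ S, d S = phi n S (xitProd n κt qt V J) := by
    intro J d hd S
    rw [hd, map_sum]
    have hterm : ∀ T : Finset (Fin (n+1)),
        phi n S (d T • xiProd n T) = if T = S then d T else 0 := by
      intro T
      rw [LinearMap.map_smul, phi_xiProd, smul_eq_mul]
      rcases eq_or_ne S T with rfl | h
      · simp
      · simp [h, Ne.symm h]
    rw [Finset.sum_congr rfl fun T _ => hterm T, Finset.sum_ite_eq' Finset.univ S d,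
      if_pos (Finset.mem_univ S)]
  have hLHS : (∑ S : Finset (Fin (n+1)), c S * c' S * (κ ^ S.card / ∏ j ∈ S, qt j))
      = Bf n κ qt (xitProd n κt qt V E) (xitProd n κt qt V H) := by
    rw [Bf]
    refine Finset.sum_congr rfl fun S _ => ?_
    rw [key E c hc S, key H c' hc' S]
    rfl
  rw [hLHS, xitProd_eq, xitProd_eq,
    Bf_xit n κ qt q κt V hq hqt hκ hV _ _ ((List.sortedLT_iff_pairwise.mp (Finset.sortedLT_sort E))) ((List.sortedLT_iff_pairwise.mp (Finset.sortedLT_sort H)))]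
  have hiff : (E.sort (· ≤ ·) = H.sort (· ≤ ·)) = (E = H) := by
    apply propext
    constructor
    · intro h
      ext a
      rw [← Finset.mem_sort (α := Fin (n+1)) (· ≤ ·), h, Finset.mem_sort]
    · intro h; rw [h]
  simp only [hiff]
  rcases eq_or_ne E H with rfl | hne
  · rw [if_pos rfl, if_pos rfl]
    have hprod : ((E.sort (· ≤ ·)).map fun j => κt / q j).prod = ∏ j ∈ E, (κt / q j) := by
      rw [Finset.prod_eq_multiset_prod, ← Finset.sort_eq E (· ≤ ·), Multiset.map_coe,
        Multiset.prod_coe]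
    rw [hprod, Finset.prod_div_distrib, Finset.prod_const]
  · rw [if_neg hne, if_neg hne]
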